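/- Let (X,d) be a metric space and f : X → X a continuous map. If (X,f) is contractive, then the hyperspace system (K(X), f̄) has the shadowing property. -/

import Mathlib

open Metric EMetric TopologicalSpace

/-- The induced map `f̄` on the hyperspace of nonempty compact subsets,
`f̄(K) = f(K)`. -/
def barMap {X : Type*} [MetricSpace X] (f : X → X) (hf : Continuous f)
    (K : TopologicalSpace.NonemptyCompacts X) : TopologicalSpace.NonemptyCompacts X :=
  ⟨⟨f '' (K : Set X), K.isCompact.image hf⟩, K.nonempty.image f⟩

/-- The system `(Y, g)` has the (full) shadowing property. -/
def ShadowingProperty {Y : Type*} [MetricSpace Y] (g : Y → Y) : Prop :=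
  ∀ ε : ℝ, 0 < ε → ∃ δ : ℝ, 0 < δ ∧
    ∀ c : ℕ → Y, (∀ j : ℕ, dist (g (c j)) (c (j + 1)) < δ) →
      ∃ x : Y, ∀ j : ℕ, dist (g^[j] x) (c j) < ε

lemma barMap_lip {X : Type*} [MetricSpace X] (f : X → X) (hf : Continuous f)
    {lam : ℝ} (hlam : 0 ≤ lam) (h : ∀ x y : X, dist (f x) (f y) ≤ lam * dist x y)
    (K L : TopologicalSpace.NonemptyCompacts X) :
    dist (barMap f hf K) (barMap f hf L) ≤ lam * dist K L := by
  rw [NonemptyCompacts.dist_eq, NonemptyCompacts.dist_eq]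
  have hfin : hausdorffEdist (K : Set X) (L : Set X) ≠ ⊤ :=
    hausdorffEdist_ne_top_of_nonempty_of_bounded K.nonempty L.nonempty
      K.isCompact.isBounded L.isCompact.isBounded
  have hfin' : hausdorffEdist (L : Set X) (K : Set X) ≠ ⊤ := by
    unfold hausdorffEdist at hfin ⊢; rwa [hausdorffEDist_comm]
  have hd : 0 ≤ hausdorffDist (K : Set X) (L : Set X) := hausdorffDist_nonneg
  apply hausdorffDist_le_of_mem_dist (by positivity)
  · rintro x ⟨a, ha, rfl⟩
    obtain ⟨b, hb, hab⟩ := L.isCompact.exists_infDist_eq_dist L.nonempty a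
    refine ⟨f b, Set.mem_image_of_mem f hb, ?_⟩
    calc dist (f a) (f b) ≤ lam * dist a b := h a b
      _ ≤ lam * hausdorffDist (K : Set X) (L : Set X) := by
          apply mul_le_mul_of_nonneg_left _ hlam
          rw [← hab]; exact infDist_le_hausdorffDist_of_mem ha hfin
  · rintro x ⟨a, ha, rfl⟩
    obtain ⟨b, hb, hab⟩ := K.isCompact.exists_infDist_eq_dist K.nonempty a
    refine ⟨f b, Set.mem_image_of_mem f hb, ?_⟩
    calc dist (f a) (f b) ≤ lam * dist a b := h a b
      _ ≤ lam * hausdorffDist (K : Set X) (L : Set X) := by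
          apply mul_le_mul_of_nonneg_left _ hlam
          rw [← hab, hausdorffDist_comm]
          exact infDist_le_hausdorffDist_of_mem ha hfin'

/-- If `(X,f)` is contractive, then the hyperspace system `(K(X), f̄)` has the
shadowing property. -/
theorem contractive_hyperspace_shadowing {X : Type*} [MetricSpace X]
    (f : X → X) (hf : Continuous f)
    (hcontr : ∃ lam : ℝ, 0 ≤ lam ∧ lam < 1 ∧ ∀ x y : X, dist (f x) (f y) ≤ lam * dist x y) :
    ShadowingProperty (barMap f hf) := by
  obtain ⟨lam, hlam0, hlam1, hlip⟩ := hcontr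
  intro ε hε
  refine ⟨ε * (1 - lam), mul_pos hε (by linarith), fun c hc => ?_⟩
  refine ⟨c 0, fun j => ?_⟩
  induction j with
  | zero => simpa using hε
  | succ j ih =>
    rw [Function.iterate_succ_apply']
    calc dist (barMap f hf ((barMap f hf)^[j] (c 0))) (c (j + 1))
        ≤ dist (barMap f hf ((barMap f hf)^[j] (c 0))) (barMap f hf (c j))
            + dist (barMap f hf (c j)) (c (j + 1)) := dist_triangle _ _ _
      _ ≤ lam * dist ((barMap f hf)^[j] (c 0)) (c j) + dist (barMap f hf (c j)) (c (j + 1)) := by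
          gcongr; exact barMap_lip f hf hlam0 hlip _ _
      _ < lam * ε + ε * (1 - lam) := by
          apply add_lt_add_of_le_of_lt _ (hc j)
          exact mul_le_mul_of_nonneg_left ih.le hlam0
      _ ≤ ε := by nlinarith
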